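/- Suppose a subgroup G of Homeo⁺(S¹) admits two dense G-invariant laminations Λ₁ and Λ₂ whose sets of endpoints are disjoint. Then each of Λ₁ and Λ₂ is totally disconnected, i.e., no open subset of the disc is foliated by the chords of either lamination. -/

import Mathlib

open Set Filter Topology

noncomputable section

/-- Two pairs `(a,b)` and `(c,d)` of distinct points of the circle are *linked*
if each connected component of `S¹ \ {a,b}` contains precisely one of `c`, `d`. -/
def Linked (a b c d : Circle) : Prop :=
  a ≠ b ∧ c ≠ d ∧ c ∉ ({a, b} : Set Circle) ∧ d ∉ ({a, b} : Set Circle) ∧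
    ∀ x ∈ ({a, b}ᶜ : Set Circle),
      Xor' (c ∈ connectedComponentIn ({a, b}ᶜ : Set Circle) x)
           (d ∈ connectedComponentIn ({a, b}ᶜ : Set Circle) x)

/-- A lamination of `S¹`: a closed subset of the set of unordered pairs of distinct
points of `S¹` (encoded as a symmetric set of ordered pairs) whose elements are
pairwise unlinked. -/
def IsLamination (Λ : Set (Circle × Circle)) : Prop :=
  (∀ l ∈ Λ, l.1 ≠ l.2) ∧ (∀ l ∈ Λ, (l.2, l.1) ∈ Λ) ∧
    (∀ l : Circle × Circle, l.1 ≠ l.2 → l ∈ closure Λ → l ∈ Λ) ∧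
    (∀ l ∈ Λ, ∀ l' ∈ Λ, ¬ Linked l.1 l.2 l'.1 l'.2)

/-- The closed unit disc in `ℂ`, whose boundary is the circle. -/
def disc : Set ℂ := Metric.closedBall 0 1

/-- The chord of the disc corresponding to a leaf. -/
def chord (l : Circle × Circle) : Set ℂ := segment ℝ (l.1 : ℂ) (l.2 : ℂ)

/-- The union of all chords of a lamination. -/
def chords (Λ : Set (Circle × Circle)) : Set ℂ := ⋃ l ∈ Λ, chord l

/-- A gap of a lamination: the closure of a connected component of the complement in
the disc of the union of the chords. -/
def IsGap (Λ : Set (Circle × Circle)) (Gp : Set ℂ) : Prop :=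
  ∃ x ∈ disc \ chords Λ, Gp = closure (connectedComponentIn (disc \ chords Λ) x)

/-- A finite-sided ideal polygon: the convex hull of a finite set of points on the
circle. -/
def IsIdealPolygon (Gp : Set ℂ) : Prop :=
  ∃ V : Finset ℂ, (V : Set ℂ) ⊆ Metric.sphere 0 1 ∧ Gp = convexHull ℝ (V : Set ℂ)

/-- A lamination is very full if each of its gaps is a finite-sided ideal polygon. -/
def VeryFull (Λ : Set (Circle × Circle)) : Prop :=
  ∀ Gp : Set ℂ, IsGap Λ Gp → IsIdealPolygon Gp

/-- Two ordered pairs represent the same unordered leaf. -/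
def SamePair (l l' : Circle × Circle) : Prop :=
  ({l.1, l.2} : Set Circle) = {l'.1, l'.2}

/-- Two leaves share an endpoint. -/
def SharesEndpoint (l l' : Circle × Circle) : Prop :=
  (({l.1, l.2} : Set Circle) ∩ {l'.1, l'.2}).Nonempty

/-- A lamination is loose if no two distinct leaves share an endpoint unless they are
edges of the same gap. -/
def Loose (Λ : Set (Circle × Circle)) : Prop :=
  ∀ l ∈ Λ, ∀ l' ∈ Λ, ¬ SamePair l l' → SharesEndpoint l l' →
    ∃ Gp : Set ℂ, IsGap Λ Gp ∧ chord l ⊆ Gp ∧ chord l' ⊆ Gp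

/-- `p` is an endpoint of some leaf of `Λ`. -/
def IsEndpoint (Λ : Set (Circle × Circle)) (p : Circle) : Prop :=
  ∃ l ∈ Λ, p = l.1 ∨ p = l.2

instance homeoGroup {X : Type*} [TopologicalSpace X] : Group (X ≃ₜ X) where
  mul f g := g.trans f
  one := Homeomorph.refl X
  inv := Homeomorph.symm
  mul_assoc f g h := rfl
  one_mul f := rfl
  mul_one f := rfl
  inv_mul_cancel f := by ext x; exact f.symm_apply_apply x

/-- A set `U` in the disc is foliated by the chords of `Λ` if every point of `U` lies
on a chord of `Λ`, and distinct chords through points of `U` are disjoint. -/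
def Foliates (Λ : Set (Circle × Circle)) (U : Set ℂ) : Prop :=
  (∀ x ∈ U, ∃ l ∈ Λ, x ∈ chord l) ∧
    ∀ l ∈ Λ, ∀ l' ∈ Λ, (chord l ∩ U).Nonempty → (chord l' ∩ U).Nonempty →
      ¬ SamePair l l' → Disjoint (chord l) (chord l')

/-- A lamination is totally disconnected if no nonempty (relatively) open subset of
the disc is foliated by its chords. -/
def TotallyDisconnectedLam (Λ : Set (Circle × Circle)) : Prop :=
  ¬ ∃ U : Set ℂ, U.Nonempty ∧ (∃ V : Set ℂ, IsOpen V ∧ U = V ∩ disc) ∧ Foliates Λ U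

/-- A lamination is dense if the set of endpoints of its leaves is dense in `S¹`. -/
def DenseLam (Λ : Set (Circle × Circle)) : Prop :=
  Dense {p : Circle | IsEndpoint Λ p}

lemma samePair_chord (l l' : Circle × Circle) (h : SamePair l l') : chord l = chord l' := by
  rcases Set.pair_eq_pair_iff.mp h with ⟨h1, h2⟩ | ⟨h1, h2⟩
  · simp [chord, h1, h2]
  · simp [chord, h1, h2, segment_symm]

lemma normSq_one_of_norm {a : ℂ} (ha : ‖a‖ = 1) : Complex.normSq a = 1 := by
  rw [← Complex.sq_norm, ha]; norm_num

lemma normSq_line (a b : ℂ) (s : ℝ) (ha : Complex.normSq a = 1) (hb : Complex.normSq b = 1) :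
    Complex.normSq (a + (s:ℂ) * (b - a)) = 1 + s * (s - 1) * Complex.normSq (b - a) := by
  simp only [Complex.normSq_apply, Complex.add_re, Complex.add_im, Complex.mul_re, Complex.mul_im,
    Complex.sub_re, Complex.sub_im, Complex.ofReal_re, Complex.ofReal_im] at *
  linear_combination (1 - s) * ha + s * hb

lemma param_unit_interval {a b x : ℂ} (ha : ‖a‖ = 1) (hb : ‖b‖ = 1) (hx : ‖x‖ < 1)
    {u : ℝ} (hxe : x = a + (u:ℂ) * (b - a)) : 0 < u ∧ u < 1 := by
  have hid := normSq_line a b u (normSq_one_of_norm ha) (normSq_one_of_norm hb)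
  have hxlt : Complex.normSq x < 1 := by
    rw [← Complex.sq_norm]; nlinarith [norm_nonneg x]
  rw [hxe, hid] at hxlt
  have h2 : u * (u - 1) * Complex.normSq (b - a) < 0 := by linarith
  have h3 : u * (u - 1) < 0 := by
    by_contra hc; push_neg at hc; nlinarith [Complex.normSq_nonneg (b - a)]
  constructor <;> nlinarith [h3]

lemma mem_chord_param {a b x : ℂ} (ha : ‖a‖ = 1) (hb : ‖b‖ = 1) (hx : ‖x‖ < 1)
    (hmem : x ∈ segment ℝ a b) : ∃ s : ℝ, 0 < s ∧ s < 1 ∧ x = a + (s:ℂ) * (b - a) := by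
  rw [segment_eq_image'] at hmem
  obtain ⟨s, _, rfl⟩ := hmem
  simp only at hx ⊢
  have hxe : a + s • (b - a) = a + (s:ℂ) * (b - a) := by simp [Complex.real_smul]
  rw [hxe] at hx ⊢
  obtain ⟨h1, h2⟩ := param_unit_interval ha hb hx rfl
  exact ⟨s, h1, h2, rfl⟩

lemma mem_chord_of_param {a b x : ℂ} (ha : ‖a‖ = 1) (hb : ‖b‖ = 1) (hx : ‖x‖ < 1)
    {u : ℝ} (hxe : x = a + (u:ℂ) * (b - a)) : x ∈ segment ℝ a b := by
  obtain ⟨h1, h2⟩ := param_unit_interval ha hb hx hxe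
  rw [segment_eq_image']
  exact ⟨u, ⟨le_of_lt h1, le_of_lt h2⟩, by rw [hxe]; simp [Complex.real_smul]⟩

lemma norm_circle (p : Circle) : ‖(p : ℂ)‖ = 1 := by
  exact Circle.norm_coe p

set_option maxHeartbeats 2000000 in
lemma key_td (Λ₁ Λ₂ : Set (Circle × Circle)) (h₁ : IsLamination Λ₁)
    (hd₂ : DenseLam Λ₂)
    (hdisj : Disjoint {p : Circle | IsEndpoint Λ₁ p} {p : Circle | IsEndpoint Λ₂ p}) :
    TotallyDisconnectedLam Λ₁ := by
  rintro ⟨U, ⟨u0, hu0⟩, ⟨V, hV, rfl⟩, hfol⟩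
  obtain ⟨hu0V, hu0d⟩ := hu0
  have hu0n : ‖u0‖ ≤ 1 := by
    simpa [disc, Metric.mem_closedBall, dist_eq_norm] using hu0d
  obtain ⟨ε, hε, hball⟩ := Metric.isOpen_iff.mp hV u0 hu0V
  set δ := min ε 1 with hδdef
  have hδ0 : 0 < δ := lt_min hε one_pos
  have hδ1 : δ ≤ 1 := min_le_right _ _
  have hδε : δ ≤ ε := min_le_left _ _
  set x₀ : ℂ := ((1 - δ/2 : ℝ) : ℂ) * u0 with hx₀def
  have hx₀V : x₀ ∈ V := by
    apply hball
    rw [Metric.mem_ball, dist_eq_norm]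
    have : x₀ - u0 = ((-(δ/2) : ℝ) : ℂ) * u0 := by rw [hx₀def]; push_cast; ring
    rw [this, norm_mul, Complex.norm_real, Real.norm_eq_abs]
    have h1 : |(-(δ/2) : ℝ)| = δ/2 := by rw [abs_neg, abs_of_pos (by linarith)]
    rw [h1]
    nlinarith [norm_nonneg u0]
  have hx₀n : ‖x₀‖ < 1 := by
    rw [hx₀def, norm_mul, Complex.norm_real, Real.norm_eq_abs, abs_of_pos (by linarith : (0:ℝ) < 1 - δ/2)]
    nlinarith [norm_nonneg u0]
  have hop : IsOpen (V ∩ Metric.ball (0:ℂ) 1) := hV.inter Metric.isOpen_ball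
  obtain ⟨r, hr, hrball⟩ := Metric.isOpen_iff.mp hop x₀
    ⟨hx₀V, by rwa [Metric.mem_ball, dist_eq_norm, sub_zero]⟩
  have hU : ∀ w : ℂ, ‖w - x₀‖ < r → w ∈ V ∩ disc := by
    intro w hw
    have h := hrball (by rwa [Metric.mem_ball, dist_eq_norm])
    exact ⟨h.1, Metric.ball_subset_closedBall h.2⟩
  have hUn : ∀ w : ℂ, ‖w - x₀‖ < r → ‖w‖ < 1 := by
    intro w hw
    have h := hrball (by rwa [Metric.mem_ball, dist_eq_norm])
    have h2 := h.2
    rwa [Metric.mem_ball, dist_eq_norm, sub_zero] at h2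
  have hSP : ∀ l ∈ Λ₁, ∀ l' ∈ Λ₁, ∀ w : ℂ,
      w ∈ chord l → w ∈ chord l' → w ∈ V ∩ disc → SamePair l l' := by
    intro l hl l' hl' w hwl hwl' hwU
    by_contra hnot
    exact (Set.disjoint_left.mp
      (hfol.2 l hl l' hl' ⟨w, hwl, hwU⟩ ⟨w, hwl', hwU⟩ hnot) hwl) hwl'
  have hx₀U : x₀ ∈ V ∩ disc := hU x₀ (by simpa using hr)
  obtain ⟨l₀, hl₀, hx₀c⟩ := hfol.1 x₀ hx₀U
  have hne₀ : (↑l₀.1 : ℂ) ≠ ↑l₀.2 := fun h => h₁.1 l₀ hl₀ (Circle.coe_injective h)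
  set d : ℂ := ↑l₀.2 - ↑l₀.1 with hd
  have hdne : d ≠ 0 := sub_ne_zero.mpr (Ne.symm hne₀)
  have hdnorm : 0 < ‖d‖ := norm_pos_iff.mpr hdne
  set ρ : ℝ := r / (2 * ‖d‖) with hρdef
  have hρ : 0 < ρ := div_pos hr (by positivity)
  set x₁ : ℂ := x₀ + (ρ:ℂ) * (Complex.I * d) with hx₁def
  have hx₁x₀ : ‖x₁ - x₀‖ = r/2 := by
    rw [hx₁def]
    simp only [add_sub_cancel_left]
    rw [norm_mul, norm_mul, Complex.norm_real, Complex.norm_I, Real.norm_eq_abs, abs_of_pos hρ, hρdef]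
    have habs : ‖d‖ ≠ 0 := ne_of_gt hdnorm
    field_simp
  have hx₁U : x₁ ∈ V ∩ disc := hU x₁ (by rw [hx₁x₀]; linarith)
  have hx₁n : ‖x₁‖ < 1 := hUn x₁ (by rw [hx₁x₀]; linarith)
  have hx₁nc : x₁ ∉ chord l₀ := by
    intro hmem
    obtain ⟨s, _, _, hse⟩ := mem_chord_param (norm_circle _) (norm_circle _) hx₁n hmem
    obtain ⟨s₀, _, _, hse₀⟩ := mem_chord_param (norm_circle _) (norm_circle _) hx₀n hx₀c
    have h1 : (ρ:ℂ) * Complex.I * d = ((s - s₀ : ℝ):ℂ) * d := by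
      push_cast
      rw [hx₁def] at hse
      linear_combination hse - hse₀
    have h2 : (ρ:ℂ) * Complex.I = ((s - s₀ : ℝ):ℂ) := mul_right_cancel₀ hdne h1
    have h3 := congrArg Complex.im h2
    simp [Complex.mul_im] at h3
    exact absurd h3 (ne_of_gt hρ)
  obtain ⟨l₁, hl₁, hx₁c⟩ := hfol.1 x₁ hx₁U
  have hnSP : ¬ SamePair l₀ l₁ := fun h => hx₁nc (by rw [samePair_chord _ _ h]; exact hx₁c)
  set e : ℂ := x₁ - x₀ with he
  have hene : e ≠ 0 := by
    intro h
    rw [he] at h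
    rw [he, h] at hx₁x₀
    simp at hx₁x₀
    linarith
  set f : ℂ → ℝ := fun w => ((w - x₀) / e).im with hf
  have hfcont : Continuous f := by
    rw [hf]
    exact Complex.continuous_im.comp ((continuous_id.sub continuous_const).div_const e)
  set z : ℝ → ℂ := fun t => x₀ + (t:ℂ) * e with hzdef
  have hzcont : Continuous z := by
    rw [hzdef]
    exact continuous_const.add (Complex.continuous_ofReal.mul continuous_const)
  have hz0 : z 0 = x₀ := by simp [hzdef]
  have hz1 : z 1 = x₁ := by simp [hzdef, he]
  have hfz : ∀ t : ℝ, f (z t) = 0 := by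
    intro t
    simp only [hf, hzdef, add_sub_cancel_left]
    rw [mul_div_assoc, div_self hene, mul_one, Complex.ofReal_im]
  have hfaff : ∀ (a b : ℂ) (s : ℝ), f (a + (s:ℂ)*(b - a)) = (1-s) * f a + s * f b := by
    intro a b s
    simp only [hf]
    have h : (a + (s:ℂ)*(b-a) - x₀)/e
        = ((1-s:ℝ):ℂ) * ((a - x₀)/e) + ((s:ℝ):ℂ) * ((b - x₀)/e) := by
      push_cast
      field_simp
      ring
    rw [h]
    simp [Complex.add_im, Complex.mul_im, Complex.ofReal_re, Complex.ofReal_im]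
  have hfline : ∀ w : ℂ, f w = 0 → ∃ t : ℝ, w = z t := by
    intro w h0
    refine ⟨((w - x₀)/e).re, ?_⟩
    have h2 : ((w - x₀)/e) = ((((w - x₀)/e).re : ℝ) : ℂ) := by
      apply Complex.ext
      · simp
      · simp only [Complex.ofReal_im]; exact h0
    have h3 : (w - x₀) = ((w - x₀)/e) * e := (div_mul_cancel₀ _ hene).symm
    rw [h2] at h3
    rw [hzdef]
    linear_combination h3
  have hzr : ∀ t : ℝ, t ∈ Icc (0:ℝ) 1 → ‖z t - x₀‖ < r := by
    intro t ht
    simp only [hzdef, add_sub_cancel_left]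
    rw [norm_mul, Complex.norm_real, Real.norm_eq_abs, abs_of_nonneg ht.1, he, hx₁x₀]
    nlinarith [ht.2, hr]
  have hzU : ∀ t : ℝ, t ∈ Icc (0:ℝ) 1 → z t ∈ V ∩ disc := fun t ht => hU _ (hzr t ht)
  have hzn : ∀ t : ℝ, t ∈ Icc (0:ℝ) 1 → ‖z t‖ < 1 := fun t ht => hUn _ (hzr t ht)
  -- sign lemma
  have hsign : ∀ t : ℝ, t ∈ Icc (0:ℝ) 1 → ∀ l ∈ Λ₁, z t ∈ chord l →
      f ↑l.1 * f ↑l.2 < 0 := by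
    intro t ht l hl hmem
    obtain ⟨s, hs0, hs1, hse⟩ := mem_chord_param (norm_circle _) (norm_circle _) (hzn t ht) hmem
    have haff := hfaff ↑l.1 ↑l.2 s
    rw [← hse, hfz t] at haff
    by_cases hfa : f ↑l.1 = 0
    · exfalso
      have hfb : f ↑l.2 = 0 := by
        rw [hfa] at haff
        have : s * f ↑l.2 = 0 := by linarith
        rcases mul_eq_zero.mp this with h | h
        · exact absurd h (ne_of_gt hs0)
        · exact h
      obtain ⟨sa, hsa⟩ := hfline _ hfa
      obtain ⟨sb, hsb⟩ := hfline _ hfb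
      have hsane : sa ≠ sb := by
        intro hh
        apply h₁.1 l hl
        apply Circle.coe_injective
        rw [hsa, hsb, hh]
      have hzz : ∀ t : ℝ, z t = x₀ + (t:ℂ) * e := fun _ => rfl
      have hkey : ∀ (w : ℂ) (tw : ℝ), w = z tw → ‖w‖ < 1 → w ∈ chord l := by
        intro w tw hw hwn
        apply mem_chord_of_param (norm_circle l.1) (norm_circle l.2) hwn
          (u := (sa - tw)/(sa - sb))
        have hcc : ((sa - tw)/(sa - sb) : ℝ) * (sb - sa) = tw - sa := by
          field_simp [sub_ne_zero.mpr hsane]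
          ring
        have hccC : (((sa - tw)/(sa - sb) : ℝ) : ℂ) * ((sb:ℂ) - (sa:ℂ)) = (tw:ℂ) - (sa:ℂ) := by
          exact_mod_cast congrArg Complex.ofReal hcc
        rw [hw, hsa, hsb, hzz, hzz, hzz]
        linear_combination (-1 : ℂ) * hccC * e
      have h0m : x₀ ∈ chord l := hkey x₀ 0 hz0.symm hx₀n
      have h1m : x₁ ∈ chord l := hkey x₁ 1 hz1.symm hx₁n
      exact hnSP (Eq.trans
        (hSP l₀ hl₀ l hl x₀ hx₀c h0m hx₀U)
        (hSP l hl l₁ hl₁ x₁ h1m hx₁c hx₁U))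
    · have haff2 : (1-s) * (f ↑l.1 * f ↑l.1) + s * (f ↑l.1 * f ↑l.2) = 0 := by
        linear_combination (-(f ↑l.1)) * haff
      nlinarith [haff2, mul_self_pos.mpr hfa, hs0, sub_pos.mpr hs1]
  clear_value z f e x₁ ρ d x₀ δ
  classical
  have hch : ∀ t : ℝ, ∃ l : Circle × Circle, t ∈ Icc (0:ℝ) 1 → l ∈ Λ₁ ∧ z t ∈ chord l := by
    intro t
    by_cases ht : t ∈ Icc (0:ℝ) 1
    · obtain ⟨l, hl, hm⟩ := hfol.1 (z t) (hzU t ht)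
      exact ⟨l, fun _ => ⟨hl, hm⟩⟩
    · exact ⟨l₀, fun h => absurd h ht⟩
  choose P hP using hch
  set A : ℝ → Circle := fun t => if 0 < f ↑(P t).1 then (P t).1 else (P t).2 with hAdef
  set B : ℝ → Circle := fun t => if 0 < f ↑(P t).1 then (P t).2 else (P t).1 with hBdef
  have hAB : ∀ t ∈ Icc (0:ℝ) 1, (A t, B t) ∈ Λ₁ ∧ z t ∈ chord (A t, B t)
      ∧ 0 < f ↑(A t) ∧ f ↑(B t) < 0 := by
    intro t ht
    obtain ⟨hPl, hPm⟩ := hP t ht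
    have hs := hsign t ht _ hPl hPm
    by_cases hc : 0 < f ↑(P t).1
    · have hA : A t = (P t).1 := by simp only [hAdef, if_pos hc]
      have hB : B t = (P t).2 := by simp only [hBdef, if_pos hc]
      rw [hA, hB]
      refine ⟨by simpa using hPl, hPm, hc, by nlinarith⟩
    · have hA : A t = (P t).2 := by simp only [hAdef, if_neg hc]
      have hB : B t = (P t).1 := by simp only [hBdef, if_neg hc]
      rw [hA, hB]
      push_neg at hc
      have hfa1 : f ↑(P t).1 < 0 := by
        rcases lt_or_eq_of_le hc with h | h
        · exact h
        · rw [h] at hs; simp at hs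
      refine ⟨h₁.2.1 _ hPl, ?_, by nlinarith, hfa1⟩
      show z t ∈ segment ℝ (↑(P t).2) (↑(P t).1)
      rw [segment_symm]
      exact hPm
  have hparam : ∀ t : ℝ, ∃ s : ℝ, t ∈ Icc (0:ℝ) 1 →
      s ∈ Icc (0:ℝ) 1 ∧ z t = ↑(A t) + (s:ℂ) * (↑(B t) - ↑(A t)) := by
    intro t
    by_cases ht : t ∈ Icc (0:ℝ) 1
    · obtain ⟨-, hm, -, -⟩ := hAB t ht
      obtain ⟨s, hs0, hs1, hse⟩ := mem_chord_param (norm_circle _) (norm_circle _) (hzn t ht) hm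
      exact ⟨s, fun _ => ⟨⟨le_of_lt hs0, le_of_lt hs1⟩, hse⟩⟩
    · exact ⟨0, fun h => absurd h ht⟩
  choose S hS using hparam
  have hAcont : ContinuousOn A (Icc (0:ℝ) 1) := by
    rw [continuousOn_iff_continuous_restrict]
    apply SeqContinuous.continuous
    intro u t hu
    apply Filter.tendsto_of_subseq_tendsto
    intro ns hns
    obtain ⟨pq, -, φ, hφ, hlim⟩ := IsCompact.tendsto_subseq
      (isCompact_univ : IsCompact (univ : Set (Circle × Circle)))
      (fun n => mem_univ (A ↑(u (ns n)), B ↑(u (ns n))))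
    obtain ⟨s', hs', ψ, hψ, hslim⟩ := (isCompact_Icc : IsCompact (Icc (0:ℝ) 1)).tendsto_subseq
      (fun n => (hS ↑(u (ns (φ n))) (u (ns (φ n))).2).1)
    have hidx : Tendsto (fun n => u (ns (φ (ψ n)))) atTop (𝓝 t) :=
      hu.comp (hns.comp ((hφ.comp hψ).tendsto_atTop))
    have htR : Tendsto (fun n => (↑(u (ns (φ (ψ n)))) : ℝ)) atTop (𝓝 ↑t) :=
      (continuous_subtype_val.tendsto t).comp hidx
    have hzlim : Tendsto (fun n => z ↑(u (ns (φ (ψ n))))) atTop (𝓝 (z ↑t)) :=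
      (hzcont.tendsto _).comp htR
    have hpair : Tendsto (fun n => (A ↑(u (ns (φ (ψ n)))), B ↑(u (ns (φ (ψ n)))))) atTop (𝓝 pq) :=
      hlim.comp hψ.tendsto_atTop
    have hAlim : Tendsto (fun n => (↑(A ↑(u (ns (φ (ψ n))))) : ℂ)) atTop (𝓝 ↑pq.1) :=
      (continuous_subtype_val.tendsto _).comp ((continuous_fst.tendsto _).comp hpair)
    have hBlim : Tendsto (fun n => (↑(B ↑(u (ns (φ (ψ n))))) : ℂ)) atTop (𝓝 ↑pq.2) :=
      (continuous_subtype_val.tendsto _).comp ((continuous_snd.tendsto _).comp hpair)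
    have hslimR : Tendsto (fun n => S ↑(u (ns (φ (ψ n))))) atTop (𝓝 s') := hslim
    have heq : z ↑t = ↑pq.1 + (s' : ℂ) * (↑pq.2 - ↑pq.1) := by
      apply tendsto_nhds_unique hzlim
      refine Tendsto.congr (fun n => ((hS ↑(u (ns (φ (ψ n)))) (u (ns (φ (ψ n)))).2).2).symm) ?_
      exact hAlim.add ((((Complex.continuous_ofReal.tendsto _).comp hslimR)).mul (hBlim.sub hAlim))
    have hpqne : pq.1 ≠ pq.2 := by
      intro hh
      rw [← hh] at heq
      simp only [sub_self, mul_zero, add_zero] at heq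
      have hlt := hzn ↑t t.2
      rw [heq, norm_circle] at hlt
      linarith
    have hmemL : pq ∈ Λ₁ := by
      apply h₁.2.2.1 pq hpqne
      apply mem_closure_of_tendsto hpair
      filter_upwards with n
      exact (hAB ↑(u (ns (φ (ψ n)))) (u (ns (φ (ψ n)))).2).1
    have hmemc : z ↑t ∈ chord pq := by
      show z ↑t ∈ segment ℝ (↑pq.1) (↑pq.2)
      rw [segment_eq_image']
      exact ⟨s', hs', by rw [heq]; simp [Complex.real_smul]⟩
    obtain ⟨hABt, hABm, hfA, hfB⟩ := hAB ↑t t.2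
    have hsp : SamePair pq (A ↑t, B ↑t) := hSP pq hmemL _ hABt (z ↑t) hmemc hABm (hzU ↑t t.2)
    have hge : 0 ≤ f ↑pq.1 := by
      have hft : Tendsto (fun n => f ↑(A ↑(u (ns (φ (ψ n)))))) atTop (𝓝 (f ↑pq.1)) :=
        (hfcont.tendsto _).comp hAlim
      exact ge_of_tendsto' hft
        (fun n => le_of_lt (hAB ↑(u (ns (φ (ψ n)))) (u (ns (φ (ψ n)))).2).2.2.1)
    have hp1 : pq.1 = A ↑t := by
      rcases Set.pair_eq_pair_iff.mp hsp with ⟨hh1, _⟩ | ⟨hh1, _⟩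
      · exact hh1
      · exfalso
        rw [hh1] at hge
        linarith
    refine ⟨φ ∘ ψ, ?_⟩
    have hfin : Tendsto (fun n => A ↑(u (ns (φ (ψ n))))) atTop (𝓝 (A ↑t)) := by
      rw [← hp1]
      exact (continuous_fst.tendsto _).comp hpair
    exact hfin
  set K : Set Circle := A '' (Icc 0 1) with hK
  have hKconn : IsPreconnected K := isPreconnected_Icc.image A hAcont
  have h0 := hAB 0 (by norm_num)
  have h1 := hAB 1 (by norm_num)
  have hA01 : A 0 ≠ A 1 := by
    intro hh
    by_cases hsp : SamePair (A 0, B 0) (A 1, B 1)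
    · have hcc := samePair_chord _ _ hsp
      have hx₁m : x₁ ∈ chord (A 0, B 0) := by rw [hcc, ← hz1]; exact h1.2.1
      have hx₀m : x₀ ∈ chord (A 0, B 0) := by rw [← hz0]; exact h0.2.1
      have hsp0 : SamePair (A 0, B 0) l₀ := hSP _ h0.1 _ hl₀ x₀ hx₀m hx₀c hx₀U
      exact hx₁nc (by rw [← samePair_chord _ _ hsp0]; exact hx₁m)
    · have hdj := hfol.2 _ h0.1 _ h1.1 ⟨x₀, by rw [← hz0]; exact h0.2.1, hx₀U⟩
        ⟨x₁, by rw [← hz1]; exact h1.2.1, hx₁U⟩ hsp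
      have hm1 : (↑(A 0) : ℂ) ∈ chord (A 0, B 0) := left_mem_segment ℝ _ _
      have hm2 : (↑(A 0) : ℂ) ∈ chord (A 1, B 1) := by
        rw [hh]; exact left_mem_segment ℝ _ _
      exact Set.disjoint_left.mp hdj hm1 hm2
  have hKend : ∀ p ∈ K, IsEndpoint Λ₁ p := by
    rintro p ⟨t, ht, rfl⟩
    exact ⟨(A t, B t), (hAB t ht).1, Or.inl rfl⟩
  have hKpos : ∀ p ∈ K, 0 < f ↑p := by
    rintro p ⟨t, ht, rfl⟩
    exact (hAB t ht).2.2.1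
  set c : Circle := B 0 with hcdef
  have hfc : f ↑c < 0 := h0.2.2.2
  have hcK : c ∉ K := fun h => lt_asymm (hKpos c h) hfc
  clear_value c
  set g : Circle → ℝ := fun w => Complex.arg (-(↑w / ↑c)) with hg
  have habs1 : ∀ v : Circle, ‖(-((v:ℂ) / ↑c))‖ = 1 := by
    intro v
    rw [norm_neg, norm_div, Circle.norm_coe, Circle.norm_coe]
    norm_num
  have hginj : ∀ w w' : Circle, g w = g w' → w = w' := by
    intro w w' hww
    have habs : ‖(-((w:ℂ) / ↑c))‖ = ‖(-((w':ℂ) / ↑c))‖ := by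
      rw [habs1, habs1]
    have hext := Complex.ext_norm_arg habs hww
    have h2 : ((w:ℂ) / ↑c) = (w':ℂ) / ↑c := neg_inj.mp hext
    apply Circle.coe_injective
    have := congrArg (fun x : ℂ => x * ↑c) h2
    simpa [div_mul_cancel₀, Circle.coe_ne_zero] using this
  have hgcont : ∀ w : Circle, w ≠ c → ContinuousAt g w := by
    intro w hw
    have hwne : -((w:ℂ) / ↑c) ≠ -1 := by
      intro hh
      apply hw
      have h2 : ((w:ℂ) / ↑c) = 1 := by
        have := congrArg Neg.neg hh
        simpa using this
      field_simp at h2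
      exact Circle.coe_injective h2
    have hslit : -((w:ℂ) / ↑c) ∈ Complex.slitPlane := by
      rw [Complex.mem_slitPlane_iff]
      by_contra hcon
      push_neg at hcon
      obtain ⟨hre, him⟩ := hcon
      have hns : Complex.normSq (-((w:ℂ) / ↑c)) = 1 :=
        normSq_one_of_norm (by exact habs1 w)
      rw [Complex.normSq_apply, him] at hns
      have hrem : (-((w:ℂ) / ↑c)).re = -1 := by nlinarith
      apply hwne
      apply Complex.ext
      · simpa using hrem
      · simpa using him
    have hinner : ContinuousAt (fun v : Circle => -((v:ℂ) / ↑c)) w :=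
      ((continuous_subtype_val.div_const _).neg).continuousAt
    have : ContinuousAt (Complex.arg ∘ (fun v : Circle => -((v:ℂ) / ↑c))) w :=
      ContinuousAt.comp (Complex.continuousAt_arg hslit) hinner
    exact this
  have hgK : ContinuousOn g K := fun w hw =>
    (hgcont w (fun hh => hcK (hh ▸ hw))).continuousWithinAt
  have hJconn : IsPreconnected (g '' K) := hKconn.image g hgK
  have hgne : g (A 0) ≠ g (A 1) := fun hh => hA01 (hginj _ _ hh)
  have hmemJ0 : g (A 0) ∈ g '' K := ⟨A 0, ⟨0, by norm_num, rfl⟩, rfl⟩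
  have hmemJ1 : g (A 1) ∈ g '' K := ⟨A 1, ⟨1, by norm_num, rfl⟩, rfl⟩
  set lo := min (g (A 0)) (g (A 1)) with hlo
  set hi := max (g (A 0)) (g (A 1)) with hhi
  have hlohi : lo < hi := min_lt_max.mpr hgne
  have hIoo : Ioo lo hi ⊆ g '' K := by
    rcases le_total (g (A 0)) (g (A 1)) with h | h
    · have hsub : Icc (g (A 0)) (g (A 1)) ⊆ g '' K := hJconn.Icc_subset hmemJ0 hmemJ1
      intro y hy
      apply hsub
      rw [hlo, min_eq_left h] at hy
      rw [hhi, max_eq_right h] at hy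
      exact ⟨le_of_lt hy.1, le_of_lt hy.2⟩
    · have hsub : Icc (g (A 1)) (g (A 0)) ⊆ g '' K := hJconn.Icc_subset hmemJ1 hmemJ0
      intro y hy
      apply hsub
      rw [hlo, min_eq_right h] at hy
      rw [hhi, max_eq_left h] at hy
      exact ⟨le_of_lt hy.1, le_of_lt hy.2⟩
  set W : Set Circle := g ⁻¹' (Ioo lo hi) with hW
  have hWK : W ⊆ K := by
    intro w hw
    obtain ⟨k, hk, hkw⟩ := hIoo hw
    exact (hginj _ _ hkw) ▸ hk
  have hWopen : IsOpen W := by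
    rw [isOpen_iff_mem_nhds]
    intro w hw
    have hwc : w ≠ c := fun hh => hcK (hh ▸ hWK hw)
    exact (hgcont w hwc).preimage_mem_nhds (Ioo_mem_nhds hw.1 hw.2)
  have hWne : W.Nonempty := by
    obtain ⟨y, hy⟩ : (Ioo lo hi).Nonempty := nonempty_Ioo.mpr hlohi
    obtain ⟨k, hk, hky⟩ := hIoo hy
    refine ⟨k, ?_⟩
    rw [hW, mem_preimage, hky]
    exact hy
  obtain ⟨q, hq2, hqW⟩ := hd₂.exists_mem_open hWopen hWne
  exact Set.disjoint_left.mp hdisj (hKend q (hWK hqW)) hq2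

/-- If a subgroup `G` of `Homeo⁺(S¹)` admits two dense invariant laminations with
disjoint endpoint sets, then each of the laminations is totally disconnected. -/
theorem two_dense_implies_totally_disconnected (G : Subgroup (Circle ≃ₜ Circle))
    (hor : ∀ g ∈ G, ∃ F : ℝ → ℝ, StrictMono F ∧ ∀ x : ℝ, g (Circle.exp x) = Circle.exp (F x))
    (Λ₁ Λ₂ : Set (Circle × Circle))
    (h₁ : IsLamination Λ₁) (h₂ : IsLamination Λ₂)
    (hinv₁ : ∀ g ∈ G, ∀ l ∈ Λ₁, (g l.1, g l.2) ∈ Λ₁)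
    (hinv₂ : ∀ g ∈ G, ∀ l ∈ Λ₂, (g l.1, g l.2) ∈ Λ₂)
    (hd₁ : DenseLam Λ₁) (hd₂ : DenseLam Λ₂)
    (hdisj : Disjoint {p : Circle | IsEndpoint Λ₁ p} {p : Circle | IsEndpoint Λ₂ p}) :
    TotallyDisconnectedLam Λ₁ ∧ TotallyDisconnectedLam Λ₂ :=
  ⟨key_td Λ₁ Λ₂ h₁ hd₂ hdisj, key_td Λ₂ Λ₁ h₂ hd₁ hdisj.symm⟩
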